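/- If D is an m × m bibifix-free matrix, then every 2m × 2m matrix whose top-left m × m block and bottom-right m × m block both equal D, with arbitrary other entries, has exactly one bibifix, namely the m × m one. -/

import Mathlib

def topLeft {α : Type*} {n : ℕ} (T : Matrix (Fin n) (Fin n) α) (r : ℕ) (h : r ≤ n) :
    Matrix (Fin r) (Fin r) α :=
  fun a b => T (Fin.castLE h a) (Fin.castLE h b)

def botRight {α : Type*} {n : ℕ} (T : Matrix (Fin n) (Fin n) α) (r : ℕ) (h : r ≤ n) :
    Matrix (Fin r) (Fin r) α :=
  fun a b => T ⟨n - r + a, by have := a.isLt; omega⟩ ⟨n - r + b, by have := b.isLt; omega⟩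

def BibifixFree {α : Type*} {n : ℕ} (T : Matrix (Fin n) (Fin n) α) : Prop :=
  ∀ (r : ℕ) (_ : 1 ≤ r) (h2 : r < n), topLeft T r h2.le ≠ botRight T r h2.le

/-- The two diagonal `m × m` blocks of the `2m × 2m` matrix `M` both equal `D`. -/
def InPhi {α : Type*} {m : ℕ} (D : Matrix (Fin m) (Fin m) α)
    (M : Matrix (Fin (2 * m)) (Fin (2 * m)) α) : Prop :=
  ∀ a b : Fin m,
    M ⟨a, by have := a.isLt; omega⟩ ⟨b, by have := b.isLt; omega⟩ = D a b ∧
    M ⟨m + a, by have := a.isLt; omega⟩ ⟨m + b, by have := b.isLt; omega⟩ = D a b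

theorem stmt_10 {α : Type*} {m : ℕ} (D : Matrix (Fin m) (Fin m) α) (hD : BibifixFree D)
    (M : Matrix (Fin (2 * m)) (Fin (2 * m)) α) (hM : InPhi D M) :
    ∀ (r : ℕ) (_ : 1 ≤ r) (h2 : r < 2 * m),
      topLeft M r h2.le = botRight M r h2.le ↔ r = m := by
  intro r h1 h2
  have hm : 1 ≤ m := by omega
  -- entrywise versions of hM
  have hTL : ∀ (i j : ℕ) (hi : i < m) (hj : j < m),
      M ⟨i, by omega⟩ ⟨j, by omega⟩ = D ⟨i, hi⟩ ⟨j, hj⟩ := fun i j hi hj =>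
    (hM ⟨i, hi⟩ ⟨j, hj⟩).1
  have hBR : ∀ (i j : ℕ) (hi : i < m) (hj : j < m),
      M ⟨m + i, by omega⟩ ⟨m + j, by omega⟩ = D ⟨i, hi⟩ ⟨j, hj⟩ := fun i j hi hj =>
    (hM ⟨i, hi⟩ ⟨j, hj⟩).2
  constructor
  · intro heq
    have key : ∀ (i j : ℕ) (hi : i < r) (hj : j < r),
        M ⟨i, by omega⟩ ⟨j, by omega⟩
          = M ⟨2 * m - r + i, by omega⟩ ⟨2 * m - r + j, by omega⟩ := by
      intro i j hi hj
      exact congrFun (congrFun heq ⟨i, hi⟩) ⟨j, hj⟩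
    by_contra hne
    rcases lt_or_gt_of_ne hne with hlt | hgt
    · -- r < m : D has bibifix of size r
      apply hD r h1 hlt
      funext a b
      show D (Fin.castLE hlt.le a) (Fin.castLE hlt.le b)
          = D ⟨m - r + a, by have := a.isLt; omega⟩ ⟨m - r + b, by have := b.isLt; omega⟩
      have e1 : M ⟨(a : ℕ), by have := a.isLt; omega⟩ ⟨(b : ℕ), by have := b.isLt; omega⟩
          = D (Fin.castLE hlt.le a) (Fin.castLE hlt.le b) :=
        hTL a b (by omega) (by omega)
      have e2 : M ⟨2 * m - r + a, by have := a.isLt; omega⟩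
            ⟨2 * m - r + b, by have := b.isLt; omega⟩
          = D ⟨m - r + a, by have := a.isLt; omega⟩ ⟨m - r + b, by have := b.isLt; omega⟩ := by
        have := hBR (m - r + a) (m - r + b) (by have := a.isLt; omega) (by have := b.isLt; omega)
        have hia : (⟨m + (m - r + a), by have := a.isLt; omega⟩ : Fin (2 * m))
            = ⟨2 * m - r + a, by have := a.isLt; omega⟩ := by
          apply Fin.ext; simp; omega
        have hjb : (⟨m + (m - r + b), by have := b.isLt; omega⟩ : Fin (2 * m))
            = ⟨2 * m - r + b, by have := b.isLt; omega⟩ := by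
          apply Fin.ext; simp; omega
        rwa [hia, hjb] at this
      rw [← e1, ← e2]
      exact key a b a.isLt b.isLt
    · -- r > m : D has bibifix of size r - m
      have hs1 : 1 ≤ r - m := by omega
      have hs2 : r - m < m := by omega
      apply hD (r - m) hs1 hs2
      funext a b
      have ha : (a : ℕ) < r - m := a.isLt
      have hb : (b : ℕ) < r - m := b.isLt
      show D (Fin.castLE hs2.le a) (Fin.castLE hs2.le b)
          = D ⟨m - (r - m) + a, by omega⟩ ⟨m - (r - m) + b, by omega⟩
      -- use key at indices m + a, m + b
      have hk := key (m + a) (m + b) (by omega) (by omega)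
      have e1 : M ⟨m + (a : ℕ), by omega⟩ ⟨m + (b : ℕ), by omega⟩
          = D (Fin.castLE hs2.le a) (Fin.castLE hs2.le b) :=
        hBR a b (by omega) (by omega)
      have e2 : M ⟨2 * m - r + (m + a), by omega⟩ ⟨2 * m - r + (m + b), by omega⟩
          = D ⟨m - (r - m) + a, by omega⟩ ⟨m - (r - m) + b, by omega⟩ := by
        have := hBR (m - (r - m) + a) (m - (r - m) + b) (by omega) (by omega)
        have hia : (⟨m + (m - (r - m) + a), by omega⟩ : Fin (2 * m))
            = ⟨2 * m - r + (m + a), by omega⟩ := by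
          apply Fin.ext; simp; omega
        have hjb : (⟨m + (m - (r - m) + b), by omega⟩ : Fin (2 * m))
            = ⟨2 * m - r + (m + b), by omega⟩ := by
          apply Fin.ext; simp; omega
        rwa [hia, hjb] at this
      rw [← e1, ← e2]
      exact hk
  · intro hrm
    subst hrm
    funext a b
    show M (Fin.castLE h2.le a) (Fin.castLE h2.le b)
        = M ⟨2 * r - r + a, by have := a.isLt; omega⟩ ⟨2 * r - r + b, by have := b.isLt; omega⟩
    have e1 : M (Fin.castLE h2.le a) (Fin.castLE h2.le b) = D a b := by
      have := hTL a b a.isLt b.isLt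
      exact this
    have e2 : M ⟨2 * r - r + a, by have := a.isLt; omega⟩
          ⟨2 * r - r + b, by have := b.isLt; omega⟩ = D a b := by
      have := hBR a b a.isLt b.isLt
      have hia : (⟨r + (a : ℕ), by have := a.isLt; omega⟩ : Fin (2 * r))
          = ⟨2 * r - r + a, by have := a.isLt; omega⟩ := by
        apply Fin.ext; simp; omega
      have hjb : (⟨r + (b : ℕ), by have := b.isLt; omega⟩ : Fin (2 * r))
          = ⟨2 * r - r + b, by have := b.isLt; omega⟩ := by
        apply Fin.ext; simp; omega
      rwa [hia, hjb] at this
    rw [e1, e2]
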